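/- Let D ⊆ ℝ^N be closed and convex, let P be a Borel probability measure on Ξ, suppose v ↦ T(v,ξ) is continuous for each ξ ∈ Ξ and ξ ↦ T(v,ξ) is Borel measurable for each v, and suppose there exist t̄ > 0 and a P‑integrable function φ̄ : Ξ → [0,∞) with ‖û(f,ξ,t)‖ ≤ φ̄(ξ) for all f ∈ 𝔽, ξ ∈ Ξ and t ∈ (0, t̄]. Define φ_t(f) = ∫_Ξ û(f,ξ,t) dP(ξ) and φ(f) = ∫_Ξ u(f,ξ) dP(ξ), where u(f,ξ) ∈ ℝ^N has components u_r(f,ξ) = θ0 d_r + θ1 C_r(f,ξ) + θ2 max(C_r(f,ξ) − τ_r, 0). If t_k > 0, t_k → 0, each f_k ∈ 𝔽 solves VI(φ_{t_k}, D), and f_k → f̄, then f̄ solves VI(φ, D). In other words, every cluster point as t ↓ 0 of solutions of the smoothed (MLAPUE) variational inequality is a solution of the unsmoothed (LAPUE) variational inequality. -/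

import Mathlib

open MeasureTheory

/-- The smoothed lateness penalty `h(z,t)`: `0` for `z < -t`, `(z+t)^2/(4t)` for
`-t ≤ z ≤ t`, and `z` for `z > t`. -/
noncomputable def hpen (t z : ℝ) : ℝ :=
  if z < -t then 0 else if z ≤ t then (z + t) ^ 2 / (4 * t) else z

variable {A N k : ℕ}

/-- The path travel time `C(f,ξ) = Δᵀ T(Δf, ξ)`, where the arc–path incidence matrix
`Δ` is encoded as a continuous linear map and `Δᵀ` as its (Euclidean) adjoint. -/
noncomputable def pathTime (Δ : EuclideanSpace ℝ (Fin N) →L[ℝ] EuclideanSpace ℝ (Fin A))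
    (T : EuclideanSpace ℝ (Fin A) → EuclideanSpace ℝ (Fin k) → EuclideanSpace ℝ (Fin A))
    (f : EuclideanSpace ℝ (Fin N)) (ξ : EuclideanSpace ℝ (Fin k)) :
    EuclideanSpace ℝ (Fin N) :=
  ContinuousLinearMap.adjoint Δ (T (Δ f) ξ)

/-- The smoothed disutility `û(f,ξ,t)` with components
`û_r = θ0 d_r + θ1 C_r(f,ξ) + θ2 h(C_r(f,ξ) − τ_r, t)`. -/
noncomputable def uhat (Δ : EuclideanSpace ℝ (Fin N) →L[ℝ] EuclideanSpace ℝ (Fin A))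
    (θ0 θ1 θ2 : ℝ) (d τ : EuclideanSpace ℝ (Fin N))
    (T : EuclideanSpace ℝ (Fin A) → EuclideanSpace ℝ (Fin k) → EuclideanSpace ℝ (Fin A))
    (f : EuclideanSpace ℝ (Fin N)) (ξ : EuclideanSpace ℝ (Fin k)) (t : ℝ) :
    EuclideanSpace ℝ (Fin N) :=
  WithLp.toLp 2 (fun r => θ0 * d r + θ1 * pathTime Δ T f ξ r + θ2 * hpen t (pathTime Δ T f ξ r - τ r))

/-- The unsmoothed (LAPUE) disutility `u(f,ξ)` with components
`u_r = θ0 d_r + θ1 C_r(f,ξ) + θ2 max(C_r(f,ξ) − τ_r, 0)`. -/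
noncomputable def uLAPUE (Δ : EuclideanSpace ℝ (Fin N) →L[ℝ] EuclideanSpace ℝ (Fin A))
    (θ0 θ1 θ2 : ℝ) (d τ : EuclideanSpace ℝ (Fin N))
    (T : EuclideanSpace ℝ (Fin A) → EuclideanSpace ℝ (Fin k) → EuclideanSpace ℝ (Fin A))
    (f : EuclideanSpace ℝ (Fin N)) (ξ : EuclideanSpace ℝ (Fin k)) :
    EuclideanSpace ℝ (Fin N) :=
  WithLp.toLp 2 (fun r => θ0 * d r + θ1 * pathTime Δ T f ξ r + θ2 * max (pathTime Δ T f ξ r - τ r) 0)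

open Filter Topology in
lemma hpen_sub_max {t z : ℝ} (ht : 0 < t) : |hpen t z - max z 0| ≤ t / 4 := by
  have h4 : (0:ℝ) < 4 * t := by linarith
  unfold hpen
  rcases lt_or_ge z (-t) with h1 | h1
  · rw [if_pos h1, max_eq_right (by linarith)]
    simp; positivity
  · rw [if_neg (not_lt.mpr h1)]
    rcases le_or_gt z t with h2 | h2
    · rw [if_pos h2]
      rcases le_or_gt z 0 with h3 | h3
      · rw [max_eq_right h3, sub_zero, abs_of_nonneg (by positivity)]
        rw [div_le_div_iff₀ h4 (by norm_num : (0:ℝ) < 4)]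
        nlinarith
      · rw [max_eq_left h3.le]
        have key : (z + t) ^ 2 / (4 * t) - z = (z - t)^2 / (4*t) := by
          field_simp; ring
        rw [key, abs_of_nonneg (by positivity)]
        rw [div_le_div_iff₀ h4 (by norm_num : (0:ℝ) < 4)]
        nlinarith
    · rw [if_neg (not_le.mpr h2), max_eq_left (by linarith), sub_self, abs_zero]; positivity

open Filter Topology in
lemma hpen_tendsto {t z : ℕ → ℝ} {z0 : ℝ} (htpos : ∀ n, 0 < t n)
    (ht : Tendsto t atTop (𝓝 0)) (hz : Tendsto z atTop (𝓝 z0)) :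
    Tendsto (fun n => hpen (t n) (z n)) atTop (𝓝 (max z0 0)) := by
  rw [tendsto_iff_dist_tendsto_zero]
  apply squeeze_zero (fun n => dist_nonneg) (g := fun n => t n / 4 + |z n - z0|)
  · intro n
    have h1 : |hpen (t n) (z n) - max (z n) 0| ≤ t n / 4 := hpen_sub_max (htpos n)
    have h2 : |max (z n) 0 - max z0 0| ≤ |z n - z0| := by
      exact abs_max_sub_max_le_abs _ _ _
    calc dist (hpen (t n) (z n)) (max z0 0)
        ≤ dist (hpen (t n) (z n)) (max (z n) 0) + dist (max (z n) 0) (max z0 0) :=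
          dist_triangle _ _ _
      _ ≤ t n / 4 + |z n - z0| := by
          rw [Real.dist_eq, Real.dist_eq]; exact add_le_add h1 h2
  · have h1 : Tendsto (fun n => t n / 4) atTop (𝓝 0) := by
      simpa using ht.div_const 4
    have h2 : Tendsto (fun n => |z n - z0|) atTop (𝓝 0) := by
      have h3 : Tendsto (fun n => z n - z0) atTop (𝓝 (z0 - z0)) :=
        hz.sub tendsto_const_nhds
      rw [sub_self] at h3
      simpa using h3.abs
    simpa using h1.add h2

lemma restrict_null_of_disjoint {α : Type*} [MeasurableSpace α] (P : Measure α)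
    [IsFiniteMeasure P] (Ξ B : Set α) (hB : MeasurableSet B) (h : B ∩ Ξ = ∅) :
    P.restrict Ξ B = 0 := by
  set S := toMeasurable P Ξ with hS
  have hres : P.restrict Ξ = P.restrict S :=
    (Measure.restrict_toMeasurable (measure_ne_top P Ξ)).symm
  rw [hres, Measure.restrict_apply hB]
  have hSm : MeasurableSet S := measurableSet_toMeasurable P Ξ
  have hsub : Ξ ⊆ S \ B := by
    intro x hx
    refine ⟨subset_toMeasurable P Ξ hx, fun hxB => ?_⟩
    have : x ∈ B ∩ Ξ := ⟨hxB, hx⟩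
    rw [h] at this; exact this
  have h1 : P S ≤ P (S \ B) := by
    rw [hS, measure_toMeasurable]
    exact measure_mono hsub
  have h2 : P (S ∩ B) + P (S \ B) = P S := measure_inter_add_diff S hB
  have h3 : P (S ∩ B) + P (S \ B) ≤ 0 + P (S \ B) := by
    rw [zero_add, h2]; exact h1
  have h4 : P (S ∩ B) ≤ 0 :=
    (ENNReal.add_le_add_iff_right (measure_ne_top P _)).mp h3
  rw [Set.inter_comm]
  exact le_antisymm h4 zero_le

lemma ae_restrict_of_forall_mem'' {α : Type*} [MeasurableSpace α] (P : Measure α)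
    [IsFiniteMeasure P] (Ξ : Set α) (p : α → Prop) (hp : MeasurableSet {x | p x})
    (Z : Set α) (hZ : P.restrict Ξ Z = 0) (h : ∀ x ∈ Ξ, ¬ p x → x ∈ Z) :
    ∀ᵐ x ∂(P.restrict Ξ), p x := by
  set μ := P.restrict Ξ with hμ
  set Zt := toMeasurable μ Z with hZt
  have hZtm : μ Zt = 0 := by rw [hZt, measure_toMeasurable]; exact hZ
  have hBm : MeasurableSet ({x | p x}ᶜ \ Zt) :=
    hp.compl.diff (measurableSet_toMeasurable μ Z)
  have hdisj : ({x | p x}ᶜ \ Zt) ∩ Ξ = ∅ := by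
    ext x
    simp only [Set.mem_inter_iff, Set.mem_diff, Set.mem_compl_iff, Set.mem_setOf_eq,
      Set.mem_empty_iff_false, iff_false, not_and, and_imp]
    intro hnp hnZt hxΞ
    exact hnZt (subset_toMeasurable μ Z (h x hxΞ hnp))
  have hB0 : μ ({x | p x}ᶜ \ Zt) = 0 := restrict_null_of_disjoint P Ξ _ hBm hdisj
  rw [ae_iff]
  refine measure_mono_null (fun x hx => ?_) (measure_union_null hB0 hZtm)
  by_cases hxZ : x ∈ Zt
  · exact Or.inr hxZ
  · exact Or.inl ⟨hx, hxZ⟩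


open scoped RealInnerProductSpace
open Filter Topology

theorem mlapue_cluster_points_solve_lapue
    (A N k : ℕ) (Δ : EuclideanSpace ℝ (Fin N) →L[ℝ] EuclideanSpace ℝ (Fin A))
    (θ0 θ1 θ2 : ℝ) (hθ0 : 0 ≤ θ0) (hθ1 : 0 ≤ θ1) (hθ2 : 0 ≤ θ2)
    (d τ : EuclideanSpace ℝ (Fin N)) (Ξ : Set (EuclideanSpace ℝ (Fin k)))
    (T : EuclideanSpace ℝ (Fin A) → EuclideanSpace ℝ (Fin k) → EuclideanSpace ℝ (Fin A))
    (𝔽 : Set (EuclideanSpace ℝ (Fin N))) (h𝔽 : IsCompact 𝔽)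
    (D : Set (EuclideanSpace ℝ (Fin N))) (hDclosed : IsClosed D) (hDconv : Convex ℝ D)
    (P : Measure (EuclideanSpace ℝ (Fin k))) [IsProbabilityMeasure P]
    (hTcont : ∀ ξ ∈ Ξ, Continuous fun v => T v ξ)
    (hTmeas : ∀ v, Measurable fun ξ => T v ξ)
    (tbar : ℝ) (htbar : 0 < tbar)
    (φbar : EuclideanSpace ℝ (Fin k) → ℝ) (hφbar0 : ∀ ξ ∈ Ξ, 0 ≤ φbar ξ)
    (hφbarInt : IntegrableOn φbar Ξ P)
    (hbound : ∀ f ∈ 𝔽, ∀ ξ ∈ Ξ, ∀ t ∈ Set.Ioc (0 : ℝ) tbar,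
      ‖uhat Δ θ0 θ1 θ2 d τ T f ξ t‖ ≤ φbar ξ)
    (tseq : ℕ → ℝ) (htpos : ∀ n, 0 < tseq n) (htlim : Tendsto tseq atTop (𝓝 0))
    (fseq : ℕ → EuclideanSpace ℝ (Fin N)) (hfF : ∀ n, fseq n ∈ 𝔽)
    (hfD : ∀ n, fseq n ∈ D)
    (hsol : ∀ n, ∀ g ∈ D,
      0 ≤ ⟪∫ ξ in Ξ, uhat Δ θ0 θ1 θ2 d τ T (fseq n) ξ (tseq n) ∂P, g - fseq n⟫)
    (fbar : EuclideanSpace ℝ (Fin N)) (hconv : Tendsto fseq atTop (𝓝 fbar)) :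
    fbar ∈ D ∧ ∀ g ∈ D, 0 ≤ ⟪∫ ξ in Ξ, uLAPUE Δ θ0 θ1 θ2 d τ T fbar ξ ∂P, g - fbar⟫  := by
  classical
  have hfbarD : fbar ∈ D := hDclosed.mem_of_tendsto hconv (Filter.Eventually.of_forall hfD)
  have hfbarF : fbar ∈ 𝔽 := h𝔽.isClosed.mem_of_tendsto hconv (Filter.Eventually.of_forall hfF)
  refine ⟨hfbarD, fun g hg => ?_⟩
  set μ := P.restrict Ξ with hμdef
  -- measurability in ξ
  have hmeasC : ∀ f : EuclideanSpace ℝ (Fin N), Measurable fun ξ => pathTime Δ T f ξ := fun f =>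
    (ContinuousLinearMap.adjoint Δ).continuous.measurable.comp (hTmeas (Δ f))
  have hmeasCr : ∀ (f : EuclideanSpace ℝ (Fin N)) (r : Fin N),
      Measurable fun ξ => pathTime Δ T f ξ r := fun f r =>
    (measurable_pi_apply r).comp ((WithLp.measurable_ofLp 2 _).comp (hmeasC f))
  have hmeasU : ∀ (f : EuclideanSpace ℝ (Fin N)) (t : ℝ),
      Measurable fun ξ => uhat Δ θ0 θ1 θ2 d τ T f ξ t := by
    intro f t
    unfold uhat
    apply (WithLp.measurable_toLp 2 _).comp
    apply measurable_pi_lambda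
    intro r
    have hz : Measurable fun ξ => pathTime Δ T f ξ r - τ r :=
      (hmeasCr f r).sub measurable_const
    have hh : Measurable fun ξ => hpen t (pathTime Δ T f ξ r - τ r) := by
      unfold hpen
      apply Measurable.ite (measurableSet_lt hz measurable_const) measurable_const
      apply Measurable.ite (measurableSet_le hz measurable_const)
      · exact ((hz.add_const t).pow_const 2).div_const _
      · exact hz
    exact (measurable_const.add ((hmeasCr f r).const_mul θ1)).add (hh.const_mul θ2)
  have hmeasUL : Measurable fun ξ => uLAPUE Δ θ0 θ1 θ2 d τ T fbar ξ := by
    unfold uLAPUE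
    apply (WithLp.measurable_toLp 2 _).comp
    apply measurable_pi_lambda
    intro r
    have hz : Measurable fun ξ => pathTime Δ T fbar ξ r - τ r :=
      (hmeasCr fbar r).sub measurable_const
    exact (measurable_const.add ((hmeasCr fbar r).const_mul θ1)).add
      ((hz.max measurable_const).const_mul θ2)
  -- pointwise convergence on Ξ
  have hptwise : ∀ ξ ∈ Ξ, Tendsto (fun n => uhat Δ θ0 θ1 θ2 d τ T (fseq n) ξ (tseq n)) atTop
      (𝓝 (uLAPUE Δ θ0 θ1 θ2 d τ T fbar ξ)) := by
    intro ξ hξ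
    have hCcont : Continuous fun f : EuclideanSpace ℝ (Fin N) => pathTime Δ T f ξ :=
      (ContinuousLinearMap.adjoint Δ).continuous.comp ((hTcont ξ hξ).comp Δ.continuous)
    have hCt : Tendsto (fun n => pathTime Δ T (fseq n) ξ) atTop (𝓝 (pathTime Δ T fbar ξ)) :=
      (hCcont.tendsto fbar).comp hconv
    have hCtr : ∀ r : Fin N, Tendsto (fun n => pathTime Δ T (fseq n) ξ r) atTop
        (𝓝 (pathTime Δ T fbar ξ r)) := fun r => ((PiLp.continuous_apply 2 _ r).tendsto _).comp hCt
    unfold uhat uLAPUE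
    apply ((PiLp.continuous_toLp 2 _).tendsto _).comp
    rw [tendsto_pi_nhds]
    intro r
    show Tendsto (fun n => θ0 * d r + θ1 * pathTime Δ T (fseq n) ξ r +
      θ2 * hpen (tseq n) (pathTime Δ T (fseq n) ξ r - τ r)) atTop
      (𝓝 (θ0 * d r + θ1 * pathTime Δ T fbar ξ r +
        θ2 * max (pathTime Δ T fbar ξ r - τ r) 0))
    have hzt : Tendsto (fun n => pathTime Δ T (fseq n) ξ r - τ r) atTop
        (𝓝 (pathTime Δ T fbar ξ r - τ r)) := (hCtr r).sub tendsto_const_nhds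
    exact (tendsto_const_nhds.add ((hCtr r).const_mul θ1)).add
      ((hpen_tendsto htpos htlim hzt).const_mul θ2)
  -- a.e. domination
  have hψ := hφbarInt.aestronglyMeasurable
  set ψ := hψ.mk φbar with hψdef
  have hψeq : φbar =ᵐ[μ] ψ := hψ.ae_eq_mk
  have hψm : Measurable ψ := hψ.stronglyMeasurable_mk.measurable
  have hZnull : μ {ξ | ¬ φbar ξ = ψ ξ} = 0 := by
    rw [← ae_iff]; exact hψeq
  have hevtbar : ∀ᶠ n in atTop, tseq n ≤ tbar :=
    htlim.eventually (eventually_le_nhds htbar)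
  have h_bound : ∀ᶠ n in atTop, ∀ᵐ ξ ∂μ,
      ‖uhat Δ θ0 θ1 θ2 d τ T (fseq n) ξ (tseq n)‖ ≤ φbar ξ := by
    filter_upwards [hevtbar] with n hn
    have hae : ∀ᵐ ξ ∂μ, ‖uhat Δ θ0 θ1 θ2 d τ T (fseq n) ξ (tseq n)‖ ≤ ψ ξ := by
      apply ae_restrict_of_forall_mem'' P Ξ _
        (measurableSet_le (hmeasU (fseq n) (tseq n)).norm hψm)
        {ξ | ¬ φbar ξ = ψ ξ} hZnull
      intro ξ hξ hnp
      have hb : ‖uhat Δ θ0 θ1 θ2 d τ T (fseq n) ξ (tseq n)‖ ≤ φbar ξ :=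
        hbound (fseq n) (hfF n) ξ hξ (tseq n) ⟨htpos n, hn⟩
      intro heq
      exact hnp (le_trans hb heq.le)
    filter_upwards [hae, hψeq] with ξ h1 h2
    rw [h2]; exact h1
  have h_lim : ∀ᵐ ξ ∂μ, Tendsto (fun n => uhat Δ θ0 θ1 θ2 d τ T (fseq n) ξ (tseq n)) atTop
      (𝓝 (uLAPUE Δ θ0 θ1 θ2 d τ T fbar ξ)) := by
    apply ae_restrict_of_forall_mem'' P Ξ _
      (measurableSet_tendsto_fun (fun n => hmeasU (fseq n) (tseq n)) hmeasUL)
      ∅ (by simp)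
    intro ξ hξ hnp
    exact absurd (hptwise ξ hξ) hnp
  have htend : Tendsto (fun n => ∫ ξ, uhat Δ θ0 θ1 θ2 d τ T (fseq n) ξ (tseq n) ∂μ) atTop
      (𝓝 (∫ ξ, uLAPUE Δ θ0 θ1 θ2 d τ T fbar ξ ∂μ)) :=
    tendsto_integral_filter_of_dominated_convergence φbar
      (Filter.Eventually.of_forall fun n => (hmeasU (fseq n) (tseq n)).aestronglyMeasurable)
      h_bound hφbarInt h_lim
  have hinner : Tendsto
      (fun n => ⟪∫ ξ, uhat Δ θ0 θ1 θ2 d τ T (fseq n) ξ (tseq n) ∂μ, g - fseq n⟫) atTop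
      (𝓝 ⟪∫ ξ, uLAPUE Δ θ0 θ1 θ2 d τ T fbar ξ ∂μ, g - fbar⟫) :=
    htend.inner (tendsto_const_nhds.sub hconv)
  exact ge_of_tendsto hinner (Filter.Eventually.of_forall fun n => hsol n g hg)
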